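/- Let Z, B, Y, C : ℝ → ℝ be continuous with Z(0)=B(0)=Y(0)=C(0)=0, B(t)-Z(t) → ∓∞ as t → ±∞, and C(t)-Y(t) → ∓∞ as t → ±∞. If Z = D⃖(Y,C) and B = R⃖(Y,C) (as functions), then Y = D(Z,B) and C = R(Z,B). -/

import Mathlib

open Filter Set

/-- Forward queueing map `Q`. -/
noncomputable def Qf (Z B : ℝ → ℝ) (t : ℝ) : ℝ :=
  sSup ((fun s => (B s - B t) - (Z s - Z t)) '' Ici t)

/-- Forward queueing map `D`. -/
noncomputable def Df (Z B : ℝ → ℝ) (t : ℝ) : ℝ := Z t + Qf Z B 0 - Qf Z B t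

/-- Forward queueing map `R`. -/
noncomputable def Rf (Z B : ℝ → ℝ) (t : ℝ) : ℝ := B t + Qf Z B t - Qf Z B 0

/-- Backward queueing map `Q⃖`. -/
noncomputable def Qb (Y C : ℝ → ℝ) (t : ℝ) : ℝ :=
  sSup ((fun s => (C t - C s) - (Y t - Y s)) '' Iic t)

/-- Backward queueing map `D⃖`. -/
noncomputable def Db (Y C : ℝ → ℝ) (t : ℝ) : ℝ := Y t + Qb Y C t - Qb Y C 0

/-- Backward queueing map `R⃖`. -/
noncomputable def Rb (Y C : ℝ → ℝ) (t : ℝ) : ℝ := C t + Qb Y C 0 - Qb Y C t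

lemma mySSup_sub_const {S : Set ℝ} (hne : S.Nonempty) (hb : BddAbove S) (c : ℝ) :
    sSup ((fun x => x - c) '' S) = sSup S - c := by
  apply IsLUB.csSup_eq _ (hne.image _)
  constructor
  · rintro _ ⟨x, hx, rfl⟩
    exact sub_le_sub_right (le_csSup hb hx) c
  · intro b hb'
    have : sSup S ≤ b + c := csSup_le hne fun x hx => by
      have := hb' (mem_image_of_mem _ hx); linarith
    linarith

lemma mySSup_const_sub {S : Set ℝ} (hne : S.Nonempty) (hb : BddBelow S) (c : ℝ) :
    sSup ((fun x => c - x) '' S) = c - sInf S := by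
  apply IsLUB.csSup_eq _ (hne.image _)
  constructor
  · rintro _ ⟨x, hx, rfl⟩
    have := csInf_le hb hx; simp only; linarith
  · intro b hb'
    have : c - b ≤ sInf S := le_csInf hne fun x hx => by
      have := hb' (mem_image_of_mem _ hx); linarith
    linarith

/-- Theorem D.1 (one direction): if `Z = D⃖(Y,C)` and `B = R⃖(Y,C)`, then
`Y = D(Z,B)` and `C = R(Z,B)`. -/
theorem inverse_queueing_maps (Z B Y C : ℝ → ℝ)
    (hZc : Continuous Z) (hBc : Continuous B) (hYc : Continuous Y) (hCc : Continuous C)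
    (hZ0 : Z 0 = 0) (hB0 : B 0 = 0) (hY0 : Y 0 = 0) (hC0 : C 0 = 0)
    (hBZtop : Tendsto (fun t => B t - Z t) atTop atBot)
    (hBZbot : Tendsto (fun t => B t - Z t) atBot atTop)
    (hCYtop : Tendsto (fun t => C t - Y t) atTop atBot)
    (hCYbot : Tendsto (fun t => C t - Y t) atBot atTop)
    (hZ : Z = Db Y C) (hB : B = Rb Y C) :
    Y = Df Z B ∧ C = Rf Z B := by
  set f : ℝ → ℝ := fun t => Y t - C t with hf
  have hfc : Continuous f := hYc.sub hCc
  have hftop : Tendsto f atTop atTop := by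
    have := tendsto_neg_atBot_atTop.comp hCYtop
    simpa [Function.comp_def, hf, neg_sub] using this
  have hfbot : Tendsto f atBot atBot := by
    have := tendsto_neg_atTop_atBot.comp hCYbot
    simpa [Function.comp_def, hf, neg_sub] using this
  -- boundedness of f on left half-lines
  have bdd : ∀ t : ℝ, BddAbove (f '' Iic t) := by
    intro t
    obtain ⟨a, ha⟩ := eventually_atBot.1 (hfbot.eventually (eventually_le_atBot (0 : ℝ)))
    obtain ⟨M, hM⟩ := (isCompact_Icc (a := min a t) (b := t)).bddAbove_image hfc.continuousOn
    refine ⟨max 0 M, ?_⟩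
    rintro _ ⟨x, hx, rfl⟩
    rcases le_or_gt x (min a t) with h | h
    · exact le_trans (ha x (h.trans (min_le_left _ _))) (le_max_left _ _)
    · exact le_trans (hM (mem_image_of_mem f ⟨h.le, hx⟩)) (le_max_right _ _)
  set F : ℝ → ℝ := fun t => sSup (f '' Iic t) with hFdef
  have hfF : ∀ t, f t ≤ F t := fun t => le_csSup (bdd t) ⟨t, mem_Iic.2 le_rfl, rfl⟩
  have hFmono : Monotone F := fun s t h =>
    csSup_le_csSup (bdd t) ⟨f s, ⟨s, mem_Iic.2 le_rfl, rfl⟩⟩ (image_mono (f := f) (Iic_subset_Iic.2 h))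
  -- Qb Y C = F - f
  have hQb : ∀ t, Qb Y C t = F t - f t := by
    intro t
    have himg : (fun s => (C t - C s) - (Y t - Y s)) '' Iic t
        = (fun x => x - f t) '' (f '' Iic t) := by
      rw [← image_comp]
      apply image_congr
      intro s _
      simp only [Function.comp, hf]
      ring
    rw [Qb, himg, mySSup_sub_const ((nonempty_Iic).image f) (bdd t)]
  -- key existence: running-max point after t
  have key : ∀ t : ℝ, ∃ s, t ≤ s ∧ f s = F t ∧ F s = F t := by
    intro t
    set S : Set ℝ := {x | t ≤ x ∧ F t ≤ f x} with hSdef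
    have hSne : S.Nonempty := by
      obtain ⟨u, hu⟩ := eventually_atTop.1 (hftop.eventually (eventually_ge_atTop (F t)))
      exact ⟨max t u, le_max_left _ _, hu _ (le_max_right _ _)⟩
    have hSbdd : BddBelow S := ⟨t, fun x hx => hx.1⟩
    have hSclosed : IsClosed S := by
      have : S = Ici t ∩ f ⁻¹' Ici (F t) := by
        ext x; simp [hSdef, and_comm]
      rw [this]
      exact isClosed_Ici.inter (isClosed_Ici.preimage hfc)
    set s := sInf S with hsdef
    have hsS : s ∈ S := hSclosed.csInf_mem hSne hSbdd
    have hts : t ≤ s := hsS.1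
    have hlt : ∀ x, t ≤ x → x < s → f x < F t := by
      intro x hx hxs
      by_contra h
      exact absurd (csInf_le hSbdd ⟨hx, not_lt.1 h⟩) (not_le.2 hxs)
    have hfs : f s = F t := by
      rcases eq_or_lt_of_le hts with h | h
      · exact le_antisymm (h ▸ hfF t) hsS.2
      · refine le_antisymm ?_ hsS.2
        have hne : (nhdsWithin s (Iio s)).NeBot := ⟨fun hbot => ?_⟩
        · refine le_of_tendsto (hfc.continuousAt.continuousWithinAt.tendsto
            (s := Iio s)) ?_
          filter_upwards [Ioo_mem_nhdsLT_of_mem (Set.mem_Ioc.2 ⟨h, le_rfl⟩)] with x hx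
          exact (hlt x hx.1.le hx.2).le
        · exact (nhdsLT_neBot s).ne hbot
      
    have hFs : F s = F t := by
      refine le_antisymm ?_ (hFmono hts)
      refine csSup_le ((nonempty_Iic).image f) ?_
      rintro _ ⟨x, hx, rfl⟩
      rcases le_or_gt x t with h | h
      · exact le_csSup (bdd t) ⟨x, h, rfl⟩
      · rcases eq_or_lt_of_le (mem_Iic.1 hx) with h' | h'
        · rw [h']; exact le_of_eq hfs
        · exact (hlt x h.le h').le
    exact ⟨s, hts, hfs, hFs⟩
  -- images for the forward map
  have bdd' : ∀ t : ℝ, BddBelow ((fun s => 2 * F s - f s) '' Ici t) := by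
    intro t
    refine ⟨F t, ?_⟩
    rintro _ ⟨x, hx, rfl⟩
    have h1 := hfF x
    have h2 := hFmono (mem_Ici.1 hx)
    simp only; linarith
  have hInf : ∀ t : ℝ, sInf ((fun s => 2 * F s - f s) '' Ici t) = F t := by
    intro t
    refine le_antisymm ?_ (le_csInf ((nonempty_Ici).image _) ?_)
    · obtain ⟨s, hts, hfs, hFs⟩ := key t
      have hmem : F t ∈ (fun s => 2 * F s - f s) '' Ici t :=
        ⟨s, mem_Ici.2 hts, by simp only; rw [hfs, hFs]; ring⟩
      exact csInf_le (bdd' t) hmem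
    · rintro _ ⟨x, hx, rfl⟩
      have h1 := hfF x
      have h2 := hFmono (mem_Ici.1 hx)
      simp only; linarith
  -- Qf Z B = F - f = Qb Y C
  have hQf : ∀ t, Qf Z B t = F t - f t := by
    intro t
    have himg : (fun s => (B s - B t) - (Z s - Z t)) '' Ici t
        = (fun x => (2 * F t - f t) - x) '' ((fun s => 2 * F s - f s) '' Ici t) := by
      rw [← image_comp]
      apply image_congr
      intro s _
      simp only [Function.comp, hZ, hB, Db, Rb, hQb, hf]
      ring
    rw [Qf, himg, mySSup_const_sub ((nonempty_Ici).image _) (bdd' t), hInf]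
    ring
  constructor
  · funext t
    rw [Df, hQf, hQf, hZ]
    simp only [Db, hQb]
    ring
  · funext t
    rw [Rf, hQf, hQf, hB]
    simp only [Rb, hQb]
    ring
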